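/- Let p be a prime and G a finite group with a strongly p-embedded subgroup H < G. Let K be a normal subgroup of G of order prime to p such that KH is a proper subgroup of G. Then HK/K is strongly p-embedded in G/K. -/

import Mathlib

open Subgroup Pointwise

/-- `K` is a strongly `p`-embedded subgroup of `H` (inside an ambient group `G`):
`K < H`, `p` divides `|K|`, and `p` does not divide `|K ∩ gKg⁻¹|` for all `g ∈ H \ K`. -/
def IsStronglyPEmbeddedIn (p : ℕ) {G : Type*} [Group G] (K H : Subgroup G) : Prop :=
  K < H ∧ p ∣ Nat.card K ∧
    ∀ g ∈ H, g ∉ K →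
      ¬ p ∣ Nat.card ↥(K ⊓ Subgroup.map (MulAut.conj g).toMonoidHom K)

/-- Cardinality of a subgroup in terms of its image in a quotient and its intersection
with the kernel. -/
lemma card_map_mk'_aux {G : Type*} [Group G] (K : Subgroup G) [K.Normal] (M : Subgroup G) :
    Nat.card M = Nat.card (M.map (QuotientGroup.mk' K)) * Nat.card (K.subgroupOf M) := by
  set φ := (QuotientGroup.mk' K).comp M.subtype with hφ
  have hker : φ.ker = K.subgroupOf M := by
    rw [hφ, ← MonoidHom.comap_ker, QuotientGroup.ker_mk']; rfl
  have hrange : φ.range = M.map (QuotientGroup.mk' K) := by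
    rw [hφ, MonoidHom.range_comp, Subgroup.range_subtype]
  have h1 : Nat.card M = Nat.card (↥M ⧸ φ.ker) * Nat.card φ.ker :=
    Subgroup.card_eq_card_quotient_mul_card_subgroup φ.ker
  have h2 : Nat.card (↥M ⧸ φ.ker) = Nat.card φ.range :=
    Nat.card_congr (QuotientGroup.quotientKerEquivRange φ).toEquiv
  rw [h1, h2, hrange, hker]

lemma card_map_mk'_dvd {G : Type*} [Group G] (K : Subgroup G) [K.Normal] (M : Subgroup G) :
    Nat.card (M.map (QuotientGroup.mk' K)) ∣ Nat.card M :=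
  Dvd.intro _ (card_map_mk'_aux K M).symm

/-- If `x` has order `p`, `K` is normal of order prime to `p`, and `x ∈ HK`, then some
`K`-conjugate of `x` lies in `H`. -/
lemma conj_mem_of_orderOf_eq {G : Type*} [Group G] [Finite G] {p : ℕ} (hp : p.Prime)
    (H K : Subgroup G) [K.Normal] (hK : ¬ p ∣ Nat.card K) {x : G} (hx : x ∈ H ⊔ K)
    (hord : orderOf x = p) : ∃ k ∈ K, k * x * k⁻¹ ∈ H := by
  haveI : Fact p.Prime := ⟨hp⟩
  set f := QuotientGroup.mk' K with hfdef
  have hxK : x ∉ K := fun h => hK (hord ▸ K.orderOf_dvd_natCard h)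
  have hfx : orderOf (f x) = p := by
    have h1 : orderOf (f x) ∣ p := hord ▸ orderOf_map_dvd f x
    have h2 : orderOf (f x) ≠ 1 := by
      rw [Ne, orderOf_eq_one_iff]
      intro h
      exact hxK ((QuotientGroup.eq_one_iff x).mp h)
    exact (hp.eq_one_or_self_of_dvd _ h1).resolve_left h2
  obtain ⟨h, hh, hfh⟩ : ∃ h ∈ H, f h = f x := by
    have hx' : x ∈ (↑(H ⊔ K) : Set G) := hx
    rw [Subgroup.mul_normal] at hx'
    obtain ⟨h, hh, k, hk, rfl⟩ := hx'
    refine ⟨h, hh, ?_⟩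
    have : f k = 1 := (QuotientGroup.eq_one_iff k).mpr hk
    rw [map_mul, this, mul_one]
  set m := orderOf h with hm
  have hpm : p ∣ m := by
    have h1 : orderOf (f h) ∣ m := orderOf_map_dvd f h
    rw [hfh, hfx] at h1
    exact h1
  have hm0 : m ≠ 0 := (orderOf_pos h).ne'
  set b := m / p ^ m.factorization p with hb
  have hbdvd : b ∣ m := Nat.ordCompl_dvd m p
  have hbp : ¬ p ∣ b := Nat.not_dvd_ordCompl hp hm0
  set h₂ := h ^ b with hh₂
  have hh₂H : h₂ ∈ H := H.pow_mem hh b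
  have horder2 : orderOf h₂ = p ^ m.factorization p := by
    rw [hh₂, orderOf_pow, ← hm, Nat.gcd_eq_right hbdvd, hb]
    exact Nat.div_div_self (Nat.ordProj_dvd m p) hm0
  have hfh₂ : f h₂ = (f x) ^ b := by rw [hh₂, map_pow, hfh]
  have hfh₂1 : f h₂ ≠ 1 := by
    rw [hfh₂]
    intro hcon
    exact hbp (hfx ▸ orderOf_dvd_of_pow_eq_one hcon)
  have hp2 : h₂ ^ p = 1 := by
    have hmem : h₂ ^ p ∈ K := by
      rw [← QuotientGroup.eq_one_iff]
      show f (h₂ ^ p) = 1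
      rw [map_pow, hfh₂, ← pow_mul, mul_comm b p, pow_mul, ← hfx, pow_orderOf_eq_one,
        one_pow]
    have hdvd1 : orderOf (h₂ ^ p) ∣ Nat.card K := K.orderOf_dvd_natCard hmem
    have hdvd2 : orderOf (h₂ ^ p) ∣ p ^ m.factorization p := by
      apply orderOf_dvd_of_pow_eq_one
      rw [← pow_mul, mul_comm, pow_mul, ← horder2, pow_orderOf_eq_one, one_pow]
    have hcop : Nat.Coprime (p ^ m.factorization p) (Nat.card K) :=
      Nat.Coprime.pow_left _ ((Nat.Prime.coprime_iff_not_dvd hp).mpr hK)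
    have : orderOf (h₂ ^ p) ∣ 1 := hcop ▸ Nat.dvd_gcd hdvd2 hdvd1
    exact orderOf_eq_one_iff.mp (Nat.dvd_one.mp this)
  have horder₂p : orderOf h₂ = p := by
    have hd : orderOf h₂ ∣ p := orderOf_dvd_of_pow_eq_one hp2
    have ne1 : orderOf h₂ ≠ 1 := by
      rw [Ne, orderOf_eq_one_iff]
      intro h1
      exact hfh₂1 (by rw [h1, map_one])
    exact (hp.eq_one_or_self_of_dvd _ hd).resolve_left ne1
  have hfh₂p : orderOf (f h₂) = p := by
    have hd : orderOf (f h₂) ∣ p := horder₂p ▸ orderOf_map_dvd f h₂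
    have ne1 : orderOf (f h₂) ≠ 1 := by rw [Ne, orderOf_eq_one_iff]; exact hfh₂1
    exact (hp.eq_one_or_self_of_dvd _ hd).resolve_left ne1
  set L := Subgroup.zpowers h₂ ⊔ K with hL
  have hzle : Subgroup.zpowers h₂ ≤ L := le_sup_left
  have hKle : K ≤ L := le_sup_right
  have hxL : x ∈ L := by
    have hzz : Subgroup.zpowers (f h₂) = Subgroup.zpowers (f x) := by
      apply Subgroup.eq_of_le_of_card_ge
      · exact Subgroup.zpowers_le.mpr (hfh₂ ▸ pow_mem (Subgroup.mem_zpowers _) b)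
      · rw [Nat.card_zpowers, Nat.card_zpowers, hfx, hfh₂p]
    have hfxz : f x ∈ Subgroup.zpowers (f h₂) := hzz ▸ Subgroup.mem_zpowers _
    obtain ⟨n, hn⟩ := hfxz
    have heq : f (h₂ ^ n) = f x := by rw [map_zpow]; exact hn
    obtain ⟨z, hz, hzx⟩ := (QuotientGroup.mk'_eq_mk' (N := K)).mp heq
    rw [← hzx]
    exact mul_mem (hzle ((Subgroup.zpowers h₂).zpow_mem (Subgroup.mem_zpowers h₂) n))
      (hKle hz)
  have hmapL : L.map f = Subgroup.zpowers (f h₂) := by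
    have hKbot : K.map f = ⊥ := by
      rw [Subgroup.map_eq_bot_iff, hfdef, QuotientGroup.ker_mk']
    rw [hL, Subgroup.map_sup, ← MonoidHom.map_zpowers, hKbot, sup_bot_eq]
  have hcardL : Nat.card L = p * Nat.card K := by
    rw [card_map_mk'_aux K L, hmapL, Nat.card_zpowers, hfh₂p,
      Nat.card_congr (Subgroup.subgroupOfEquivOfLe hKle).toEquiv]
  have hfact : (Nat.card ↥L).factorization p = 1 := by
    rw [hcardL, Nat.factorization_mul hp.pos.ne' Nat.card_pos.ne']
    simp [hp.factorization, Nat.factorization_eq_zero_of_not_dvd hK]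
  have hcardP : Nat.card ((Subgroup.zpowers h₂).subgroupOf L) =
      p ^ (Nat.card ↥L).factorization p := by
    rw [hfact, pow_one, Nat.card_congr (Subgroup.subgroupOfEquivOfLe hzle).toEquiv,
      Nat.card_zpowers, horder₂p]
  set Psyl : Sylow p ↥L := Sylow.ofCard _ hcardP with hPsyl
  have hxle' : Subgroup.zpowers x ≤ L := Subgroup.zpowers_le.mpr hxL
  have hXp : IsPGroup p ((Subgroup.zpowers x).subgroupOf L) := by
    apply IsPGroup.of_card (n := 1)
    rw [Nat.card_congr (Subgroup.subgroupOfEquivOfLe hxle').toEquiv, Nat.card_zpowers,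
      hord, pow_one]
  obtain ⟨Q, hQ⟩ := hXp.exists_le_sylow
  obtain ⟨y, hy⟩ := MulAction.exists_smul_eq ↥L Q Psyl
  set x' : ↥L := ⟨x, hxL⟩ with hx'
  have hx'Q : x' ∈ (Q : Subgroup ↥L) := hQ (by
    show (x' : G) ∈ Subgroup.zpowers x
    exact Subgroup.mem_zpowers x)
  have key : y * x' * y⁻¹ ∈ (Psyl : Subgroup ↥L) := by
    rw [← hy]
    show y * x' * y⁻¹ ∈ ((y • Q : Sylow p ↥L) : Subgroup ↥L)
    rw [Sylow.coe_subgroup_smul]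
    have : MulAut.conj y • x' ∈ MulAut.conj y • (Q : Subgroup ↥L) :=
      Subgroup.smul_mem_pointwise_smul_iff.mpr hx'Q
    simpa [MulAut.smul_def, MulAut.conj_apply] using this
  have key2 : (y : G) * x * (y : G)⁻¹ ∈ Subgroup.zpowers h₂ := by
    have := key
    rw [hPsyl] at this
    have h3 : ((y * x' * y⁻¹ : ↥L) : G) ∈ Subgroup.zpowers h₂ := this
    simpa [hx'] using h3
  have hyL : (y : G) ∈ (↑(Subgroup.zpowers h₂ ⊔ K) : Set G) := y.2
  rw [Subgroup.mul_normal] at hyL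
  obtain ⟨c, hc, k, hk, hck⟩ := hyL
  refine ⟨k, hk, ?_⟩
  have heq2 : k * x * k⁻¹ = c⁻¹ * ((y : G) * x * (y : G)⁻¹) * c := by
    rw [← hck]; group
  rw [heq2]
  exact Subgroup.zpowers_le.mpr hh₂H (mul_mem (mul_mem (inv_mem hc) key2) hc)

/-- If `H` is strongly `p`-embedded in a finite group `G`, and `K ⊴ G` is a normal subgroup of
order prime to `p` with `KH < G`, then `HK/K` is strongly `p`-embedded in `G/K`. -/
theorem stmt_4 (p : ℕ) (hp : p.Prime) (G : Type*) [Group G] [Finite G]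
    (H : Subgroup G) (hH : IsStronglyPEmbeddedIn p H ⊤)
    (K : Subgroup G) [K.Normal] (hK : ¬ p ∣ Nat.card K) (hKH : K ⊔ H < ⊤) :
    IsStronglyPEmbeddedIn p (H.map (QuotientGroup.mk' K)) ⊤ := by
  haveI : Fact p.Prime := ⟨hp⟩
  refine ⟨?_, ?_, ?_⟩
  · rw [lt_top_iff_ne_top]
    intro htop
    have h2 : H ⊔ K = ⊤ := by
      have := congrArg (Subgroup.comap (QuotientGroup.mk' K)) htop
      rwa [Subgroup.comap_map_eq, QuotientGroup.ker_mk', Subgroup.comap_top] at this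
    exact hKH.ne (by rw [sup_comm]; exact h2)
  · have hEq := card_map_mk'_aux K H
    have hker : ¬ p ∣ Nat.card (K.subgroupOf H) := fun hd =>
      hK (hd.trans (Subgroup.card_comap_dvd_of_injective K H.subtype H.subtype_injective))
    have hdvd := hH.2.1
    rw [hEq] at hdvd
    exact (hp.dvd_mul.mp hdvd).resolve_right hker
  · intro gq _ hgq hdvd
    obtain ⟨g, rfl⟩ := QuotientGroup.mk'_surjective K gq
    set f := QuotientGroup.mk' K with hfdef
    set H' := H.map (MulAut.conj g).toMonoidHom with hH'
    set M := (H ⊔ K) ⊓ (H' ⊔ K) with hM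
    have hle : (H.map f) ⊓ Subgroup.map (MulAut.conj (f g)).toMonoidHom (H.map f) ≤
        M.map f := by
      rintro ξ ⟨hξ1, hξ2⟩
      obtain ⟨h, hh, rfl⟩ := hξ1
      obtain ⟨η, hη, hηeq⟩ := hξ2
      obtain ⟨h₀, hh₀, rfl⟩ := hη
      have heq : f (g * h₀ * g⁻¹) = f h := by
        rw [map_mul, map_mul, map_inv]
        simpa [MulAut.conj_apply] using hηeq
      obtain ⟨z, hz, hzeq⟩ := (QuotientGroup.mk'_eq_mk' (N := K)).mp heq
      refine ⟨h, Subgroup.mem_inf.mpr ⟨(le_sup_left : H ≤ H ⊔ K) hh, ?_⟩, rfl⟩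
      rw [← hzeq]
      exact mul_mem ((le_sup_left : H' ≤ H' ⊔ K) ⟨h₀, hh₀, rfl⟩) ((le_sup_right : K ≤ H' ⊔ K) hz)
    have hdvdM : p ∣ Nat.card M :=
      (hdvd.trans (Subgroup.card_dvd_of_le hle)).trans (card_map_mk'_dvd K M)
    obtain ⟨xe, hxe⟩ := exists_prime_orderOf_dvd_card' (G := ↥M) p hdvdM
    have hordx : orderOf (xe : G) = p := by rw [Subgroup.orderOf_coe]; exact hxe
    have hx1 : (xe : G) ∈ H ⊔ K := xe.2.1
    have hx2 : (xe : G) ∈ H' ⊔ K := xe.2.2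
    obtain ⟨k₁, hk₁, hc₁⟩ := conj_mem_of_orderOf_eq hp H K hK hx1 hordx
    obtain ⟨k₂, hk₂, hc₂⟩ := conj_mem_of_orderOf_eq hp H' K hK hx2 hordx
    obtain ⟨h₀, hh₀, hh₀eq⟩ := hc₂
    have hh₀eq' : g * h₀ * g⁻¹ = k₂ * ↑xe * k₂⁻¹ := by
      simpa [MulAut.conj_apply] using hh₀eq
    set g' := k₁ * k₂⁻¹ * g with hg'
    have hg'H : g' ∉ H := by
      intro hmem
      apply hgq
      have hgg : g = k₂ * k₁⁻¹ * g' := by rw [hg']; group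
      have hfg : f g = f g' := by
        have e2 : f k₂ = 1 := (QuotientGroup.eq_one_iff k₂).mpr hk₂
        have e1 : f k₁ = 1 := (QuotientGroup.eq_one_iff k₁).mpr hk₁
        rw [hgg, map_mul, map_mul, map_inv, e1, e2]
        simp
      exact hfg ▸ ⟨g', hmem, rfl⟩
    have hzH : k₁ * ↑xe * k₁⁻¹ ∈ H := hc₁
    have hzH' : k₁ * ↑xe * k₁⁻¹ ∈ H.map (MulAut.conj g').toMonoidHom := by
      refine ⟨h₀, hh₀, ?_⟩
      show MulAut.conj g' h₀ = k₁ * ↑xe * k₁⁻¹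
      rw [MulAut.conj_apply, hg']
      have : (k₁ * k₂⁻¹ * g) * h₀ * (k₁ * k₂⁻¹ * g)⁻¹ =
          k₁ * k₂⁻¹ * (g * h₀ * g⁻¹) * (k₂ * k₁⁻¹) := by group
      rw [this, hh₀eq']
      group
    have hord' := hH.2.2 g' (Subgroup.mem_top g') hg'H
    apply hord'
    have hordz : orderOf (k₁ * ↑xe * k₁⁻¹) = p := by
      rw [← hordx]
      exact (SemiconjBy.orderOf_eq k₁ (by group : k₁ * ↑xe = (k₁ * ↑xe * k₁⁻¹) * k₁)).symm
    calc p = orderOf (⟨k₁ * ↑xe * k₁⁻¹, Subgroup.mem_inf.mpr ⟨hzH, hzH'⟩⟩ :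
        ↥(H ⊓ H.map (MulAut.conj g').toMonoidHom)) := by
          rw [Subgroup.orderOf_mk, hordz]
      _ ∣ _ := orderOf_dvd_natCard _
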